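/- arXiv:1610.09338 — 5 statements merged into one kernel-verified Lean document; each statement's English description precedes it below -/
import Mathlib

section
/- For any real α ≥ 0 and any real ν, the identity e^{−ν²} = −2α ν² M(−α/2 + 1/2, 3/2, −ν²) M(−α/2 + 1, 3/2, −ν²) + M(−α/2 + 1/2, 1/2, −ν²) M(−α/2, 1/2, −ν²) holds. -/
open Real Filter Topology

section KummerAux
open Finset Polynomial

noncomputable def kumP (a : ℝ) : ℕ → ℝ
  | 0 => 1
  | k+1 => kumP a k * (2*a+1+2*k) / ((2*k+1)*(k+1))

noncomputable def kumQ (a : ℝ) : ℕ → ℝ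
  | 0 => 1
  | k+1 => kumQ a k * (2*a+2*k) / ((2*k+1)*(k+1))

lemma kumP_zero (a : ℝ) : kumP a 0 = 1 := rfl
lemma kumQ_zero (a : ℝ) : kumQ a 0 = 1 := rfl
lemma kumP_succ (a : ℝ) (k : ℕ) :
    kumP a (k+1) = kumP a k * (2*a+1+2*k) / ((2*k+1)*(k+1)) := rfl
lemma kumQ_succ (a : ℝ) (k : ℕ) :
    kumQ a (k+1) = kumQ a k * (2*a+2*k) / ((2*k+1)*(k+1)) := rfl

noncomputable def kumT (a : ℝ) (n : ℕ) : ℝ :=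
  ∑ k ∈ Finset.range (n+1), (4*(k:ℝ)+1-2*(n:ℝ))/(2*k+1) * kumP a k * kumQ a (n-k)

lemma kumT_zero (a : ℝ) : kumT a 0 = 1 := by
  simp [kumT, kumP_zero, kumQ_zero]

lemma kumT_step (a : ℝ) (n : ℕ) : ((n:ℝ)+1) * kumT a (n+1) = kumT a n := by
  have key : ∀ k ∈ Finset.range (n+1),
      ((n:ℝ)+1) * ((4*(k:ℝ)+1-2*((n:ℝ)+1))/(2*k+1) * kumP a k * kumQ a (n+1-k)) -
        (4*(k:ℝ)+1-2*(n:ℝ))/(2*k+1) * kumP a k * kumQ a (n-k)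
      = ((k:ℝ) * kumP a k * kumQ a (n+1-k) -
          ((k:ℝ)+1) * kumP a (k+1) * kumQ a (n+1-(k+1))) := by
    intro k hk
    rw [Finset.mem_range, Nat.lt_succ_iff] at hk
    obtain ⟨m, rfl⟩ := Nat.exists_eq_add_of_le hk
    have h1 : k + m + 1 - k = m + 1 := by omega
    have h2 : k + m - k = m := by omega
    have h3 : k + m + 1 - (k+1) = m := by omega
    rw [h1, h2, h3, kumP_succ, kumQ_succ]
    have hk1 : ((2:ℝ)*k+1) ≠ 0 := by positivity
    have hk2 : ((k:ℝ)+1) ≠ 0 := by positivity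
    have hm1 : ((2:ℝ)*m+1) ≠ 0 := by positivity
    have hm2 : ((m:ℝ)+1) ≠ 0 := by positivity
    push_cast
    field_simp
    ring
  have tele := Finset.sum_range_sub' (fun j => (j:ℝ) * kumP a j * kumQ a (n+1-j)) (n+1)
  have h2 : ((n:ℝ)+1) * (∑ k ∈ Finset.range (n+1),
      (4*(k:ℝ)+1-2*((n:ℝ)+1))/(2*k+1) * kumP a k * kumQ a (n+1-k)) -
      kumT a n
      = -(((n:ℝ)+1) * kumP a (n+1)) := by
    rw [Finset.mul_sum, kumT, ← Finset.sum_sub_distrib, Finset.sum_congr rfl key]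
    simpa [kumQ_zero] using tele
  have hT1 : kumT a (n+1) = (∑ k ∈ Finset.range (n+1),
      (4*(k:ℝ)+1-2*((n:ℝ)+1))/(2*k+1) * kumP a k * kumQ a (n+1-k)) + kumP a (n+1) := by
    rw [kumT, Finset.sum_range_succ, Nat.sub_self, kumQ_zero]
    congr 1
    · exact Finset.sum_congr rfl fun k _ => by push_cast; ring
    · have hpos : (2*((n:ℝ)+1)+1) ≠ 0 := by positivity
      have : (4*((n:ℝ)+1)+1-2*((n:ℝ)+1))/(2*((n:ℝ)+1)+1) = 1 := by
        rw [div_eq_one_iff_eq hpos]; ring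
      push_cast
      rw [this]; ring
  rw [hT1, mul_add]
  linarith [h2]

lemma kumT_eq (a : ℝ) (n : ℕ) : kumT a n = 1 / (Nat.factorial n : ℝ) := by
  induction n with
  | zero => simpa using kumT_zero a
  | succ n ih =>
    have h := kumT_step a n
    rw [ih] at h
    have hn : ((n:ℝ)+1) ≠ 0 := by positivity
    have hf : ((Nat.factorial n : ℝ)) ≠ 0 := by
      exact_mod_cast Nat.cast_ne_zero.mpr (Nat.factorial_ne_zero n)
    rw [Nat.factorial_succ]
    push_cast
    field_simp at h ⊢
    linarith [h]

lemma asc_succ_left (x : ℝ) (k : ℕ) :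
    (ascPochhammer ℝ (k+1)).eval x = x * (ascPochhammer ℝ k).eval (x+1) := by
  rw [ascPochhammer_succ_left]
  simp [eval_comp]

lemma kumP_eq (a : ℝ) (k : ℕ) :
    (ascPochhammer ℝ k).eval (a+1/2) /
      ((ascPochhammer ℝ k).eval (1/2 : ℝ) * (Nat.factorial k : ℝ)) = kumP a k := by
  induction k with
  | zero => simp [kumP]
  | succ k ih =>
    have hpos : (0:ℝ) < (ascPochhammer ℝ k).eval (1/2 : ℝ) :=
      ascPochhammer_pos k (1/2 : ℝ) (by norm_num)
    have hne : (ascPochhammer ℝ k).eval (1/2 : ℝ) ≠ 0 := hpos.ne'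
    have hf : ((Nat.factorial k : ℝ)) ≠ 0 :=
      Nat.cast_ne_zero.mpr (Nat.factorial_ne_zero k)
    have hk1 : ((2:ℝ)*k+1) ≠ 0 := by positivity
    have hk2 : ((k:ℝ)+1) ≠ 0 := by positivity
    have hhalf : ((1:ℝ)/2 + k) ≠ 0 := by positivity
    rw [ascPochhammer_succ_eval, ascPochhammer_succ_eval, kumP_succ, ← ih,
      Nat.factorial_succ]
    push_cast
    field_simp
    ring

lemma kumQ_eq (a : ℝ) (k : ℕ) :
    (ascPochhammer ℝ k).eval a /
      ((ascPochhammer ℝ k).eval (1/2 : ℝ) * (Nat.factorial k : ℝ)) = kumQ a k := by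
  induction k with
  | zero => simp [kumQ]
  | succ k ih =>
    have hpos : (0:ℝ) < (ascPochhammer ℝ k).eval (1/2 : ℝ) :=
      ascPochhammer_pos k (1/2 : ℝ) (by norm_num)
    have hne : (ascPochhammer ℝ k).eval (1/2 : ℝ) ≠ 0 := hpos.ne'
    have hf : ((Nat.factorial k : ℝ)) ≠ 0 :=
      Nat.cast_ne_zero.mpr (Nat.factorial_ne_zero k)
    have hk1 : ((2:ℝ)*k+1) ≠ 0 := by positivity
    have hk2 : ((k:ℝ)+1) ≠ 0 := by positivity
    have hhalf : ((1:ℝ)/2 + k) ≠ 0 := by positivity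
    rw [ascPochhammer_succ_eval, ascPochhammer_succ_eval, kumQ_succ, ← ih,
      Nat.factorial_succ]
    push_cast
    field_simp
    ring

lemma kumR_eq (a : ℝ) (k : ℕ) :
    (ascPochhammer ℝ k).eval (a+1/2) /
      ((ascPochhammer ℝ k).eval (3/2 : ℝ) * (Nat.factorial k : ℝ))
      = kumP a k / (2*k+1) := by
  induction k with
  | zero => simp [kumP]
  | succ k ih =>
    have hpos : (0:ℝ) < (ascPochhammer ℝ k).eval (3/2 : ℝ) :=
      ascPochhammer_pos k (3/2 : ℝ) (by norm_num)
    have hne : (ascPochhammer ℝ k).eval (3/2 : ℝ) ≠ 0 := hpos.ne'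
    have hf : ((Nat.factorial k : ℝ)) ≠ 0 :=
      Nat.cast_ne_zero.mpr (Nat.factorial_ne_zero k)
    have hk1 : ((2:ℝ)*k+1) ≠ 0 := by positivity
    have hk2 : ((k:ℝ)+1) ≠ 0 := by positivity
    have hk3 : ((2:ℝ)*k+3) ≠ 0 := by positivity
    have hhalf : ((3:ℝ)/2 + k) ≠ 0 := by positivity
    have hX : (ascPochhammer ℝ k).eval (a+1/2)
        = kumP a k / (2*k+1) * ((ascPochhammer ℝ k).eval (3/2 : ℝ) * (Nat.factorial k : ℝ)) := by
      rw [← ih]; field_simp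
    rw [ascPochhammer_succ_eval, ascPochhammer_succ_eval, kumP_succ,
      Nat.factorial_succ, hX]
    push_cast
    field_simp
    ring

lemma kumS_eq (a : ℝ) (k : ℕ) :
    a * ((ascPochhammer ℝ k).eval (a+1) /
      ((ascPochhammer ℝ k).eval (3/2 : ℝ) * (Nat.factorial k : ℝ)))
      = ((k:ℝ)+1) * kumQ a (k+1) / 2 := by
  have h1 : (ascPochhammer ℝ (k+1)).eval a = a * (ascPochhammer ℝ k).eval (a+1) :=
    asc_succ_left a k
  have h2 : (ascPochhammer ℝ (k+1)).eval (1/2 : ℝ)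
      = (1/2 : ℝ) * (ascPochhammer ℝ k).eval (3/2 : ℝ) := by
    have := asc_succ_left (1/2 : ℝ) k
    norm_num at this ⊢
    convert this using 3 <;> norm_num
  have hQ := kumQ_eq a (k+1)
  rw [h1, h2, Nat.factorial_succ] at hQ
  have hpos : (0:ℝ) < (ascPochhammer ℝ k).eval (3/2 : ℝ) :=
    ascPochhammer_pos k (3/2 : ℝ) (by norm_num)
  have hne : (ascPochhammer ℝ k).eval (3/2 : ℝ) ≠ 0 := hpos.ne'
  have hf : ((Nat.factorial k : ℝ)) ≠ 0 :=
    Nat.cast_ne_zero.mpr (Nat.factorial_ne_zero k)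
  have hk2 : ((k:ℝ)+1) ≠ 0 := by positivity
  rw [← hQ]
  push_cast
  field_simp

lemma aux_summable_norm (c : ℕ → ℝ) (C z : ℝ)
    (h : ∀ k : ℕ, |c (k+1)| * ((k:ℝ)+1) ≤ |c k| * C) :
    Summable (fun k => ‖c k * z ^ k‖) := by
  apply summable_of_ratio_norm_eventually_le (r := 1/2) (by norm_num)
  obtain ⟨N, hN⟩ := exists_nat_ge (2 * C * |z|)
  filter_upwards [eventually_ge_atTop N] with k hk
  rw [norm_norm, norm_norm, Real.norm_eq_abs, Real.norm_eq_abs, abs_mul, abs_mul,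
    abs_pow, abs_pow, pow_succ]
  have hkpos : (0:ℝ) < (k:ℝ) + 1 := by positivity
  have h1 : |c (k+1)| ≤ |c k| * C / ((k:ℝ)+1) := by
    rw [le_div_iff₀ hkpos]; exact h k
  have h2 : 2 * C * |z| ≤ (k:ℝ) + 1 := by
    calc 2 * C * |z| ≤ (N:ℝ) := hN
    _ ≤ (k:ℝ) := by exact_mod_cast hk
    _ ≤ (k:ℝ) + 1 := by linarith
  have hz : (0:ℝ) ≤ |z| := abs_nonneg z
  have hzk : (0:ℝ) ≤ |z|^k := by positivity
  calc |c (k+1)| * (|z|^k * |z|)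
      ≤ (|c k| * C / ((k:ℝ)+1)) * (|z|^k * |z|) := by
        apply mul_le_mul_of_nonneg_right h1 (by positivity)
    _ = (|c k| * |z|^k) * (C * |z| / ((k:ℝ)+1)) := by ring
    _ ≤ (|c k| * |z|^k) * (1/2) := by
        apply mul_le_mul_of_nonneg_left _ (by positivity)
        rw [div_le_iff₀ hkpos]
        nlinarith [abs_nonneg (c k)]
    _ = 1/2 * (|c k| * |z|^k) := by ring

lemma bound_P (a : ℝ) (k : ℕ) :
    |kumP a (k+1)| * ((k:ℝ)+1) ≤ |kumP a k| * (|2*a+1|+1) := by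
  rw [kumP_succ, abs_div, abs_mul]
  have hd : (0:ℝ) < (2*(k:ℝ)+1)*((k:ℝ)+1) := by positivity
  rw [abs_of_pos hd, div_mul_eq_mul_div, div_le_iff₀ hd]
  have hk0 : (0:ℝ) ≤ 2*(k:ℝ) := by positivity
  have hb : |2*a+1+2*(k:ℝ)| ≤ |2*a+1| + 2*(k:ℝ) := by
    calc |2*a+1+2*(k:ℝ)| ≤ |2*a+1| + |2*(k:ℝ)| := abs_add_le _ _
    _ = |2*a+1| + 2*(k:ℝ) := by rw [abs_of_nonneg hk0]
  have hnum : |2*a+1+2*(k:ℝ)| ≤ (|2*a+1|+1) * (2*(k:ℝ)+1) := by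
    nlinarith [mul_nonneg (abs_nonneg (2*a+1)) hk0]
  have base : |kumP a k| * |2*a+1+2*(k:ℝ)| ≤ |kumP a k| * ((|2*a+1|+1) * (2*(k:ℝ)+1)) :=
    mul_le_mul_of_nonneg_left hnum (abs_nonneg _)
  nlinarith [mul_le_mul_of_nonneg_right base (show (0:ℝ) ≤ (k:ℝ)+1 by positivity)]

lemma bound_Q (a : ℝ) (k : ℕ) :
    |kumQ a (k+1)| * ((k:ℝ)+1) ≤ |kumQ a k| * (|2*a|+1) := by
  rw [kumQ_succ, abs_div, abs_mul]
  have hd : (0:ℝ) < (2*(k:ℝ)+1)*((k:ℝ)+1) := by positivity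
  rw [abs_of_pos hd, div_mul_eq_mul_div, div_le_iff₀ hd]
  have hk0 : (0:ℝ) ≤ 2*(k:ℝ) := by positivity
  have hb : |2*a+2*(k:ℝ)| ≤ |2*a| + 2*(k:ℝ) := by
    calc |2*a+2*(k:ℝ)| ≤ |2*a| + |2*(k:ℝ)| := abs_add_le _ _
    _ = |2*a| + 2*(k:ℝ) := by rw [abs_of_nonneg hk0]
  have hnum : |2*a+2*(k:ℝ)| ≤ (|2*a|+1) * (2*(k:ℝ)+1) := by
    nlinarith [mul_nonneg (abs_nonneg (2*a)) hk0]
  have base : |kumQ a k| * |2*a+2*(k:ℝ)| ≤ |kumQ a k| * ((|2*a|+1) * (2*(k:ℝ)+1)) :=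
    mul_le_mul_of_nonneg_left hnum (abs_nonneg _)
  nlinarith [mul_le_mul_of_nonneg_right base (show (0:ℝ) ≤ (k:ℝ)+1 by positivity)]

lemma bound_R (a : ℝ) (k : ℕ) :
    |kumP a (k+1) / (2*(↑(k+1):ℝ)+1)| * ((k:ℝ)+1)
      ≤ |kumP a k / (2*(k:ℝ)+1)| * (|2*a+1|+1) := by
  push_cast
  rw [abs_div, abs_div, abs_of_pos (show (0:ℝ) < 2*((k:ℝ)+1)+1 by positivity),
    abs_of_pos (show (0:ℝ) < 2*(k:ℝ)+1 by positivity)]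
  have h := bound_P a k
  have h1 : (0:ℝ) < 2*(k:ℝ)+1 := by positivity
  have h2 : (0:ℝ) < 2*((k:ℝ)+1)+1 := by positivity
  rw [div_mul_eq_mul_div, div_mul_eq_mul_div, div_le_div_iff₀ h2 h1]
  have hle : (2:ℝ)*(k:ℝ)+1 ≤ 2*((k:ℝ)+1)+1 := by linarith
  nlinarith [abs_nonneg (kumP a (k+1)), abs_nonneg (kumP a k), abs_nonneg (2*a+1),
    mul_le_mul_of_nonneg_right h (le_of_lt h1),
    mul_le_mul_of_nonneg_left hle (mul_nonneg (abs_nonneg (kumP a (k+1))) (show (0:ℝ) ≤ (k:ℝ)+1 by positivity))]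

lemma bound_S (a : ℝ) (k : ℕ) :
    |(-2)*((↑(k+1):ℝ)+1) * kumQ a ((k+1)+1)| * ((k:ℝ)+1)
      ≤ |(-2)*((k:ℝ)+1) * kumQ a (k+1)| * (|2*a|+1) := by
  have hQ := bound_Q a (k+1)
  push_cast at hQ ⊢
  rw [abs_mul, abs_mul, abs_mul, abs_mul]
  have e1 : |(-2:ℝ)| = 2 := by norm_num
  rw [e1, abs_of_pos (show (0:ℝ) < (k:ℝ)+1+1 by positivity),
    abs_of_pos (show (0:ℝ) < (k:ℝ)+1 by positivity)]
  nlinarith [mul_le_mul_of_nonneg_left hQ (show (0:ℝ) ≤ 2*((k:ℝ)+1) by positivity),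
    abs_nonneg (kumQ a (k+2)), abs_nonneg (kumQ a (k+1)), abs_nonneg (2*a)]

lemma kumT_eq_shift (a : ℝ) (m : ℕ) :
    (∑ k ∈ Finset.range (m+2), (4*(k:ℝ)+1-2*((m:ℝ)+1))/(2*k+1) * kumP a k * kumQ a (m+1-k))
      = 1 / (Nat.factorial (m+1) : ℝ) := by
  have h := kumT_eq a (m+1)
  rw [kumT] at h
  push_cast at h ⊢
  convert h using 2

end KummerAux

/-- The Kummer confluent hypergeometric function `M(a,b,z)`, defined by its power series. -/
noncomputable def kummerM (a b z : ℝ) : ℝ :=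
  ∑' s : ℕ, ((ascPochhammer ℝ s).eval a / ((ascPochhammer ℝ s).eval b * (Nat.factorial s : ℝ)))
      * z ^ s

section KummerAux2
open Finset Polynomial

lemma merge_lemma (a : ℝ) (m : ℕ) :
    (∑ kl ∈ Finset.HasAntidiagonal.antidiagonal m,
        (kumP a kl.1 / (2*(kl.1:ℝ)+1)) * ((-2)*((kl.2:ℝ)+1) * kumQ a (kl.2+1)))
      + (∑ kl ∈ Finset.HasAntidiagonal.antidiagonal (m+1), kumP a kl.1 * kumQ a kl.2)
      = ∑ k ∈ Finset.range (m+2), (4*(k:ℝ)+1-2*((m:ℝ)+1))/(2*k+1) * kumP a k * kumQ a (m+1-k) := by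
  rw [Finset.Nat.sum_antidiagonal_eq_sum_range_succ_mk,
    Finset.Nat.sum_antidiagonal_eq_sum_range_succ_mk]
  rw [Finset.sum_range_succ (n := m+1), Finset.sum_range_succ (n := m+1)]
  have hlast : (4*((↑(m+1)):ℝ)+1-2*((m:ℝ)+1))/(2*(↑(m+1):ℝ)+1) * kumP a (m+1) * kumQ a (m+1-(m+1))
      = kumP a (m+1) * kumQ a (m+1-(m+1)) := by
    have hpos : (2*((↑(m+1)):ℝ)+1) ≠ 0 := by positivity
    have : (4*((↑(m+1)):ℝ)+1-2*((m:ℝ)+1))/(2*(↑(m+1):ℝ)+1) = 1 := by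
      rw [div_eq_one_iff_eq hpos]; push_cast; ring
    rw [this, one_mul]
  rw [hlast, ← add_assoc]
  congr 1
  rw [← Finset.sum_add_distrib]
  apply Finset.sum_congr rfl
  intro k hk
  rw [Finset.mem_range, Nat.lt_succ_iff] at hk
  obtain ⟨j, rfl⟩ := Nat.exists_eq_add_of_le hk
  have h1 : k + j - k = j := by omega
  have h2 : k + j + 1 - k = j + 1 := by omega
  rw [h1, h2]
  have hk1 : ((2:ℝ)*k+1) ≠ 0 := by positivity
  push_cast
  field_simp
  ring

theorem kummer_identity_general (a z : ℝ) :
    Real.exp z = -4*a*z * kummerM (a+1/2) (3/2) z * kummerM (a+1) (3/2) z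
      + kummerM (a+1/2) (1/2) z * kummerM a (1/2) z := by
  set c1 : ℕ → ℝ := fun k => kumP a k with hc1
  set c2 : ℕ → ℝ := fun k => kumQ a k with hc2
  set c3 : ℕ → ℝ := fun k => kumP a k / (2*(k:ℝ)+1) with hc3
  set c4 : ℕ → ℝ := fun k => (-2)*((k:ℝ)+1) * kumQ a (k+1) with hc4
  have e1 : kummerM (a+1/2) (1/2) z = ∑' k, c1 k * z^k := by
    rw [kummerM]; exact tsum_congr fun k => by rw [hc1]; rw [kumP_eq a k]
  have e2 : kummerM a (1/2) z = ∑' k, c2 k * z^k := by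
    rw [kummerM]; exact tsum_congr fun k => by rw [hc2]; rw [kumQ_eq a k]
  have e3 : kummerM (a+1/2) (3/2) z = ∑' k, c3 k * z^k := by
    rw [kummerM]; exact tsum_congr fun k => by rw [hc3]; rw [kumR_eq a k]
  have e4 : -4*a * kummerM (a+1) (3/2) z = ∑' k, c4 k * z^k := by
    rw [kummerM, ← tsum_mul_left]
    exact tsum_congr fun k => by
      rw [hc4]
      linear_combination (-4*z^k) * kumS_eq a k
  have s1 : Summable (fun k => ‖c1 k * z^k‖) :=
    aux_summable_norm c1 (|2*a+1|+1) z (fun k => bound_P a k)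
  have s2 : Summable (fun k => ‖c2 k * z^k‖) :=
    aux_summable_norm c2 (|2*a|+1) z (fun k => bound_Q a k)
  have s3 : Summable (fun k => ‖c3 k * z^k‖) :=
    aux_summable_norm c3 (|2*a+1|+1) z (fun k => bound_R a k)
  have s4 : Summable (fun k => ‖c4 k * z^k‖) :=
    aux_summable_norm c4 (|2*a|+1) z (fun k => bound_S a k)
  set E : ℕ → ℝ := fun n => ∑ kl ∈ Finset.HasAntidiagonal.antidiagonal n, c3 kl.1 * c4 kl.2 with hE
  set F : ℕ → ℝ := fun n => ∑ kl ∈ Finset.HasAntidiagonal.antidiagonal n, c1 kl.1 * c2 kl.2 with hF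
  have inner : ∀ (c d : ℕ → ℝ) (n : ℕ),
      (∑ kl ∈ Finset.HasAntidiagonal.antidiagonal n, (c kl.1 * z^kl.1) * (d kl.2 * z^kl.2))
        = (∑ kl ∈ Finset.HasAntidiagonal.antidiagonal n, c kl.1 * d kl.2) * z^n := by
    intro c d n
    rw [Finset.sum_mul]
    apply Finset.sum_congr rfl
    rintro ⟨i, j⟩ hij
    rw [Finset.HasAntidiagonal.mem_antidiagonal] at hij
    simp only
    rw [← hij, pow_add]; ring
  have q1 : kummerM (a+1/2) (3/2) z * (-4*a * kummerM (a+1) (3/2) z) = ∑' n, E n * z^n := by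
    rw [e3, e4, tsum_mul_tsum_eq_tsum_sum_antidiagonal_of_summable_norm s3 s4]
    exact tsum_congr fun n => inner c3 c4 n
  have q2 : kummerM (a+1/2) (1/2) z * kummerM a (1/2) z = ∑' n, F n * z^n := by
    rw [e1, e2, tsum_mul_tsum_eq_tsum_sum_antidiagonal_of_summable_norm s1 s2]
    exact tsum_congr fun n => inner c1 c2 n
  have sE : Summable (fun n => E n * z^n) := by
    have h := summable_norm_sum_mul_antidiagonal_of_summable_norm s3 s4
    refine Summable.of_norm (h.congr fun n => ?_)
    rw [inner c3 c4 n]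
  have sF : Summable (fun n => F n * z^n) := by
    have h := summable_norm_sum_mul_antidiagonal_of_summable_norm s1 s2
    refine Summable.of_norm (h.congr fun n => ?_)
    rw [inner c1 c2 n]
  -- shifted sequence
  set v : ℕ → ℝ := fun n => match n with | 0 => 0 | (m+1) => E m * z^(m+1) with hv
  have hv1 : (fun n => v (n+1)) = fun n => z * (E n * z^n) := by
    funext n; show E n * z^(n+1) = z * (E n * z^n); ring
  have sv : Summable v := by
    rw [← summable_nat_add_iff 1, hv1]
    exact sE.mul_left z
  have tv : ∑' n, v n = z * ∑' n, E n * z^n := by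
    rw [Summable.tsum_eq_zero_add sv, show v 0 = 0 from rfl, zero_add]
    have : ∑' (n:ℕ), v (n+1) = ∑' (n:ℕ), z * (E n * z^n) := by
      exact tsum_congr fun n => by show E n * z^(n+1) = z * (E n * z^n); ring
    rw [this, tsum_mul_left]
  have key : ∀ n : ℕ, v n + F n * z^n = (1/(Nat.factorial n : ℝ)) * z^n := by
    intro n
    cases n with
    | zero =>
      simp only [hv, hF]
      rw [Finset.Nat.antidiagonal_zero]
      simp [hc1, hc2, kumP, kumQ]
    | succ m =>
      have hm : E m + F (m+1) = 1 / (Nat.factorial (m+1) : ℝ) := by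
        rw [hE, hF]
        simp only [hc1, hc2, hc3, hc4]
        rw [merge_lemma a m]
        exact kumT_eq_shift a m
      show E m * z^(m+1) + F (m+1) * z^(m+1) = _
      calc E m * z^(m+1) + F (m+1) * z^(m+1) = (E m + F (m+1)) * z^(m+1) := by ring
      _ = (1/(Nat.factorial (m+1) : ℝ)) * z^(m+1) := by rw [hm]
  calc Real.exp z = ∑' n : ℕ, z^n / (Nat.factorial n : ℝ) := by
        rw [Real.exp_eq_exp_ℝ, NormedSpace.exp_eq_tsum_div]
    _ = ∑' n : ℕ, (v n + F n * z^n) := by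
        exact tsum_congr fun n => by rw [key n]; ring
    _ = (∑' n, v n) + ∑' n, F n * z^n := Summable.tsum_add sv sF
    _ = z * (∑' n, E n * z^n) + ∑' n, F n * z^n := by rw [tv]
    _ = -4*a*z * kummerM (a+1/2) (3/2) z * kummerM (a+1) (3/2) z
        + kummerM (a+1/2) (1/2) z * kummerM a (1/2) z := by
        rw [q2, ← q1]; ring

end KummerAux2

/-- Wronskian-type identity used in the Stefan condition. -/
theorem kummerM_wronskian_identity (α : ℝ) (hα : 0 ≤ α) (ν : ℝ) :
    Real.exp (-ν ^ 2)
      = -2 * α * ν ^ 2 * kummerM (-α / 2 + 1 / 2) (3 / 2) (-ν ^ 2)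
            * kummerM (-α / 2 + 1) (3 / 2) (-ν ^ 2)
        + kummerM (-α / 2 + 1 / 2) (1 / 2) (-ν ^ 2) * kummerM (-α / 2) (1 / 2) (-ν ^ 2) := by
  have h := kummer_identity_general (-α / 2) (-ν ^ 2)
  rw [h]
  ring
end

section
/- Let α ≥ 0, d > 0, k > 0, h₀ > 0 and define f₁(x) = 1 / [ M(α/2 + 1/2, 1/2, x²) + 2(√d h₀/k) x M(α/2 + 1, 3/2, x²) ] for x > 0. Then f₁ is differentiable on (0,∞) with f₁'(x) = −[ 2(α+1) x M(α/2 + 3/2, 3/2, x²) + 2(√d/k) h₀ M(α/2 + 1, 1/2, x²) ] f₁(x)², and consequently f₁'(x) < 0 for all x > 0; i.e., f₁ is strictly decreasing on (0,∞). -/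
open Real Filter Topology

namespace KumAux

noncomputable def kc (a b : ℝ) (s : ℕ) : ℝ :=
  (ascPochhammer ℝ s).eval a / ((ascPochhammer ℝ s).eval b * (Nat.factorial s : ℝ))

lemma kummerM_eq (a b z : ℝ) : kummerM a b z = ∑' s : ℕ, kc a b s * z ^ s := rfl

lemma asc_pos {x : ℝ} (hx : 0 < x) (s : ℕ) : 0 < (ascPochhammer ℝ s).eval x :=
  ascPochhammer_pos s x hx

lemma kc_zero (a b : ℝ) : kc a b 0 = 1 := by simp [kc]

lemma kc_pos {a b : ℝ} (ha : 0 < a) (hb : 0 < b) (s : ℕ) : 0 < kc a b s := by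
  apply div_pos (asc_pos ha s)
  exact mul_pos (asc_pos hb s) (by positivity)

lemma kc_succ {b : ℝ} (hb : 0 < b) (a : ℝ) (s : ℕ) :
    kc a b (s + 1) = kc a b s * ((a + s) / ((b + s) * (s + 1))) := by
  have h1 : (ascPochhammer ℝ s).eval b ≠ 0 := (asc_pos hb s).ne'
  have h2 : (0:ℝ) < b + s := by positivity
  have h3 : ((s:ℝ) + 1) ≠ 0 := by positivity
  have h4 : ((Nat.factorial s : ℕ) : ℝ) ≠ 0 := by positivity
  simp only [kc, ascPochhammer_succ_eval, Nat.factorial_succ, Nat.cast_mul, Nat.cast_add,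
    Nat.cast_one]
  field_simp

lemma kc_succ' {b : ℝ} (hb : 0 < b) (a : ℝ) (s : ℕ) :
    ((s : ℝ) + 1) * kc a b (s + 1) = a / b * kc (a + 1) (b + 1) s := by
  have hnum : (ascPochhammer ℝ (s + 1)).eval a = a * (ascPochhammer ℝ s).eval (a + 1) := by
    rw [ascPochhammer_succ_left]
    simp [Polynomial.eval_comp, mul_comm]
  have hden : (ascPochhammer ℝ (s + 1)).eval b = b * (ascPochhammer ℝ s).eval (b + 1) := by
    rw [ascPochhammer_succ_left]
    simp [Polynomial.eval_comp, mul_comm]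
  have h1 : (ascPochhammer ℝ s).eval (b + 1) ≠ 0 := (asc_pos (by linarith) s).ne'
  have h3 : ((s:ℝ) + 1) ≠ 0 := by positivity
  have h4 : ((Nat.factorial s : ℕ) : ℝ) ≠ 0 := by positivity
  simp only [kc, hnum, hden, Nat.factorial_succ, Nat.cast_mul, Nat.cast_add, Nat.cast_one]
  field_simp

lemma summable_kum {a b : ℝ} (ha : 0 < a) (hb : 0 < b) (z : ℝ) :
    Summable (fun s : ℕ => kc a b s * z ^ s) := by
  apply summable_of_ratio_norm_eventually_le (r := 1/2) (by norm_num)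
  filter_upwards [eventually_ge_atTop (⌈max a (4 * |z|)⌉₊)] with s hs
  have hs' : max a (4 * |z|) ≤ (s : ℝ) := le_trans (Nat.le_ceil _) (by exact_mod_cast hs)
  have hsa : a ≤ (s : ℝ) := le_trans (le_max_left _ _) hs'
  have hsz : 4 * |z| ≤ (s : ℝ) := le_trans (le_max_right _ _) hs'
  have hkpos := kc_pos ha hb s
  have hkpos' := kc_pos ha hb (s + 1)
  simp only [norm_mul, norm_pow, Real.norm_eq_abs, abs_of_pos hkpos, abs_of_pos hkpos']
  rw [kc_succ hb, pow_succ]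
  have hzabs : (0:ℝ) ≤ |z| := abs_nonneg z
  have hratio : (a + s) / ((b + s) * (s + 1)) * |z| ≤ 1/2 := by
    rw [div_mul_eq_mul_div, div_le_iff₀ (by positivity)]
    nlinarith [Nat.cast_nonneg (α := ℝ) s]
  calc kc a b s * ((a + s) / ((b + s) * (s + 1))) * (|z| ^ s * |z|)
      = kc a b s * |z| ^ s * ((a + s) / ((b + s) * (s + 1)) * |z|) := by ring
    _ ≤ kc a b s * |z| ^ s * (1/2) := by
        apply mul_le_mul_of_nonneg_left hratio (by positivity)
    _ = 1/2 * (kc a b s * |z| ^ s) := by ring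

lemma one_le_kummerM {a b : ℝ} (ha : 0 < a) (hb : 0 < b) {z : ℝ} (hz : 0 ≤ z) :
    1 ≤ kummerM a b z := by
  rw [kummerM_eq]
  have h0 : kc a b 0 * z ^ 0 = 1 := by simp [kc_zero]
  calc (1:ℝ) = kc a b 0 * z ^ 0 := h0.symm
    _ ≤ ∑' s : ℕ, kc a b s * z ^ s :=
        Summable.le_tsum (summable_kum ha hb z) 0
          (fun i _ => mul_nonneg (kc_pos ha hb i).le (pow_nonneg hz i))

lemma kummerM_pos {a b : ℝ} (ha : 0 < a) (hb : 0 < b) {z : ℝ} (hz : 0 ≤ z) :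
    0 < kummerM a b z := lt_of_lt_of_le one_pos (one_le_kummerM ha hb hz)

lemma summable_deriv_terms {a b : ℝ} (ha : 0 < a) (hb : 0 < b) (R : ℝ) :
    Summable (fun s : ℕ => kc a b s * ((s : ℝ) * R ^ (s - 1))) := by
  rw [← summable_nat_add_iff 1]
  have : (fun s : ℕ => kc a b (s + 1) * (((s : ℝ) + 1) * R ^ s)) =
      (fun s : ℕ => a / b * (kc (a + 1) (b + 1) s * R ^ s)) := by
    funext s
    rw [show kc a b (s+1) * (((s:ℝ)+1) * R ^ s) = (((s:ℝ)+1) * kc a b (s+1)) * R ^ s from by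
      ring, kc_succ' hb a s]
    ring
  simp only [Nat.cast_add, Nat.cast_one, Nat.add_sub_cancel]
  rw [this]
  exact (summable_kum (by linarith) (by linarith) R).mul_left _

lemma tsum_deriv {a b : ℝ} (ha : 0 < a) (hb : 0 < b) (z : ℝ)
    (hsum : Summable (fun s : ℕ => kc a b s * ((s : ℝ) * z ^ (s - 1)))) :
    ∑' s : ℕ, kc a b s * ((s : ℝ) * z ^ (s - 1)) = a / b * kummerM (a + 1) (b + 1) z := by
  rw [Summable.tsum_eq_zero_add hsum]
  simp only [Nat.cast_zero, zero_mul, mul_zero, zero_add, Nat.cast_add, Nat.cast_one,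
    Nat.add_sub_cancel]
  have : (fun s : ℕ => kc a b (s + 1) * (((s : ℝ) + 1) * z ^ s)) =
      (fun s : ℕ => a / b * (kc (a + 1) (b + 1) s * z ^ s)) := by
    funext s
    rw [show kc a b (s+1) * (((s:ℝ)+1) * z ^ s) = (((s:ℝ)+1) * kc a b (s+1)) * z ^ s from by
      ring, kc_succ' hb a s]
    ring
  rw [this, tsum_mul_left, kummerM_eq]

lemma hasDerivAt_kummerM {a b : ℝ} (ha : 0 < a) (hb : 0 < b) (z : ℝ) :
    HasDerivAt (fun y => kummerM a b y) (a / b * kummerM (a + 1) (b + 1) z) z := by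
  set R : ℝ := |z| + 1 with hR
  have hzR : z ∈ Metric.ball (0:ℝ) R := by
    rw [Metric.mem_ball, dist_zero_right, Real.norm_eq_abs, hR]
    linarith
  have hu : Summable (fun s : ℕ => kc a b s * ((s : ℝ) * R ^ (s - 1))) :=
    summable_deriv_terms ha hb R
  have key : HasDerivAt (fun y => ∑' s : ℕ, kc a b s * y ^ s)
      (∑' s : ℕ, kc a b s * ((s : ℝ) * z ^ (s - 1))) z := by
    apply hasDerivAt_tsum_of_isPreconnected hu Metric.isOpen_ball
      (convex_ball (0:ℝ) R).isPreconnected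
      (g := fun s y => kc a b s * y ^ s)
      (g' := fun s y => kc a b s * ((s : ℝ) * y ^ (s - 1)))
      (y₀ := 0) ?_ ?_ ?_ ?_ hzR
    · intro n y _
      exact (hasDerivAt_pow n y).const_mul _
    · intro n y hy
      have hyR : |y| ≤ R := by
        simp [Real.dist_eq, Metric.mem_ball] at hy
        linarith [le_of_lt hy]
      have h1 : |y| ^ (n - 1) ≤ R ^ (n - 1) := pow_le_pow_left₀ (abs_nonneg y) hyR _
      have hk := kc_pos ha hb n
      rw [norm_mul, norm_mul, Real.norm_eq_abs, Real.norm_eq_abs, Real.norm_eq_abs,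
        abs_of_pos hk, Nat.abs_cast, abs_pow]
      have hR0 : (0:ℝ) ≤ R := by positivity
      calc kc a b n * ((n:ℝ) * |y| ^ (n-1)) ≤ kc a b n * ((n:ℝ) * R ^ (n-1)) := by
            apply mul_le_mul_of_nonneg_left _ hk.le
            exact mul_le_mul_of_nonneg_left h1 (Nat.cast_nonneg n)
        _ = kc a b n * ((n:ℝ) * R ^ (n-1)) := rfl
    · exact Metric.mem_ball_self (by positivity)
    · exact summable_kum ha hb 0
  rw [tsum_deriv ha hb z] at key
  · exact key
  · apply Summable.of_norm_bounded hu
    intro s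
    have hk := kc_pos ha hb s
    have hzR' : |z| ≤ R := by rw [hR]; linarith
    rw [norm_mul, norm_mul, Real.norm_eq_abs, Real.norm_eq_abs, Real.norm_eq_abs,
      abs_of_pos hk, Nat.abs_cast, abs_pow]
    apply mul_le_mul_of_nonneg_left _ hk.le
    exact mul_le_mul_of_nonneg_left (pow_le_pow_left₀ (abs_nonneg z) hzR' _) (Nat.cast_nonneg s)

lemma coeff_id {a : ℝ} (ha : 0 < a) (s : ℕ) :
    kc a (1/2) (s + 1) = kc a (3/2) (s + 1) + 4 * a / 3 * kc (a + 1) (5/2) s := by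
  have hnum : (ascPochhammer ℝ (s + 1)).eval a = a * (ascPochhammer ℝ s).eval (a + 1) := by
    rw [ascPochhammer_succ_left]; simp [Polynomial.eval_comp, mul_comm]
  have h12 : (ascPochhammer ℝ (s + 1)).eval (1/2 : ℝ)
      = (1/2 : ℝ) * (ascPochhammer ℝ s).eval (3/2 : ℝ) := by
    rw [ascPochhammer_succ_left]; simp [Polynomial.eval_comp]; norm_num
  have h32 : (ascPochhammer ℝ (s + 1)).eval (3/2 : ℝ)
      = (3/2 : ℝ) * (ascPochhammer ℝ s).eval (5/2 : ℝ) := by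
    rw [ascPochhammer_succ_left]; simp [Polynomial.eval_comp]; norm_num
  have hrel : (ascPochhammer ℝ s).eval (3/2 : ℝ) * ((3:ℝ)/2 + s)
      = (3/2 : ℝ) * (ascPochhammer ℝ s).eval (5/2 : ℝ) := by
    rw [← ascPochhammer_succ_eval, h32]
  have p3 : (0:ℝ) < (ascPochhammer ℝ s).eval (3/2 : ℝ) := asc_pos (by norm_num) s
  have p5 : (0:ℝ) < (ascPochhammer ℝ s).eval (5/2 : ℝ) := asc_pos (by norm_num) s
  have pf : (0:ℝ) < ((Nat.factorial s : ℕ) : ℝ) := by positivity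
  have ps : (0:ℝ) < (s:ℝ) + 1 := by positivity
  have hs32 : (0:ℝ) < (3:ℝ)/2 + s := by positivity
  have hp3 : Polynomial.eval ((3:ℝ)/2) (ascPochhammer ℝ s)
      = 3/2 * Polynomial.eval ((5:ℝ)/2) (ascPochhammer ℝ s) / (3/2 + s) := by
    rw [eq_div_iff hs32.ne']
    linarith [hrel]
  simp only [kc, hnum, h12, h32, Nat.factorial_succ, Nat.cast_mul, Nat.cast_add, Nat.cast_one]
  rw [hp3]
  field_simp
  ring

lemma kummer_id {a : ℝ} (ha : 0 < a) (z : ℝ) :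
    kummerM a (1/2) z = kummerM a (3/2) z + 4 * a / 3 * z * kummerM (a + 1) (5/2) z := by
  have hs5 := summable_kum (a := a + 1) (b := 5/2) (by linarith) (by norm_num) z
  have hs3 := summable_kum (a := a) (b := 3/2) ha (by norm_num) z
  -- the shifted series
  set h : ℕ → ℝ := fun s => Nat.rec 0 (fun t _ => 4 * a / 3 * kc (a + 1) (5/2) t * z ^ (t + 1)) s
    with hh
  have h0 : h 0 = 0 := rfl
  have hsucc : ∀ t, h (t + 1) = 4 * a / 3 * kc (a + 1) (5/2) t * z ^ (t + 1) := fun t => rfl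
  have hsummable : Summable h := by
    rw [← summable_nat_add_iff 1]
    simp only [hsucc]
    have : (fun t : ℕ => 4 * a / 3 * kc (a + 1) (5/2) t * z ^ (t + 1)) =
        (fun t : ℕ => (4 * a / 3 * z) * (kc (a + 1) (5/2) t * z ^ t)) := by
      funext t; ring
    rw [this]
    exact hs5.mul_left _
  have hzsum : 4 * a / 3 * z * kummerM (a + 1) (5/2) z = ∑' s : ℕ, h s := by
    rw [Summable.tsum_eq_zero_add hsummable, h0, zero_add, kummerM_eq]
    simp only [hsucc]
    rw [← tsum_mul_left (a := 4 * a / 3 * z)]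
    congr 1; funext t; ring
  rw [hzsum, kummerM_eq, kummerM_eq, ← Summable.tsum_add hs3 hsummable]
  congr 1
  funext s
  cases s with
  | zero => simp [kc_zero, h0]
  | succ t =>
    rw [hsucc, show kc a (1/2) (t+1) * z ^ (t+1)
        = (kc a (3/2) (t+1) + 4 * a / 3 * kc (a + 1) (5/2) t) * z ^ (t+1) from by
      rw [coeff_id ha]]
    ring

end KumAux

/-- the function `f₁` is differentiable with the given negative derivative,
hence strictly decreasing on `(0,∞)`. -/
theorem f1_strict_anti (α d k h₀ : ℝ) (hα : 0 ≤ α) (hd : 0 < d) (hk : 0 < k) (hh : 0 < h₀)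
    (f₁ : ℝ → ℝ)
    (hf₁ : ∀ x : ℝ, 0 < x → f₁ x =
      1 / (kummerM (α / 2 + 1 / 2) (1 / 2) (x ^ 2)
        + 2 * (Real.sqrt d * h₀ / k) * x * kummerM (α / 2 + 1) (3 / 2) (x ^ 2))) :
    (∀ x : ℝ, 0 < x →
        HasDerivAt f₁
          (-(2 * (α + 1) * x * kummerM (α / 2 + 3 / 2) (3 / 2) (x ^ 2)
              + 2 * (Real.sqrt d / k) * h₀ * kummerM (α / 2 + 1) (1 / 2) (x ^ 2)) * (f₁ x) ^ 2)
          x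
        ∧ deriv f₁ x < 0)
      ∧ StrictAntiOn f₁ (Set.Ioi 0) := by
  have hsd : 0 < Real.sqrt d := Real.sqrt_pos.mpr hd
  have ha₁ : (0:ℝ) < α / 2 + 1 / 2 := by linarith
  have ha₂ : (0:ℝ) < α / 2 + 1 := by linarith
  set g : ℝ → ℝ := fun y => kummerM (α / 2 + 1 / 2) (1 / 2) (y ^ 2)
      + 2 * (Real.sqrt d * h₀ / k) * y * kummerM (α / 2 + 1) (3 / 2) (y ^ 2) with hgdef
  have hgpos : ∀ x : ℝ, 0 < x → 0 < g x := by
    intro x hx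
    have h1 := KumAux.one_le_kummerM (b := 1/2) ha₁ (by norm_num) (sq_nonneg x)
    have h2 := KumAux.one_le_kummerM (b := 3/2) ha₂ (by norm_num) (sq_nonneg x)
    have h3 : 0 < 2 * (Real.sqrt d * h₀ / k) * x := by positivity
    show (0:ℝ) < kummerM (α / 2 + 1 / 2) (1 / 2) (x ^ 2)
      + 2 * (Real.sqrt d * h₀ / k) * x * kummerM (α / 2 + 1) (3 / 2) (x ^ 2)
    nlinarith
  have key : ∀ x : ℝ, 0 < x →
      HasDerivAt f₁
        (-(2 * (α + 1) * x * kummerM (α / 2 + 3 / 2) (3 / 2) (x ^ 2)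
            + 2 * (Real.sqrt d / k) * h₀ * kummerM (α / 2 + 1) (1 / 2) (x ^ 2)) * (f₁ x) ^ 2)
        x := by
    intro x hx
    have hx2 : HasDerivAt (fun y : ℝ => y ^ 2) (2 * x) x := by
      simpa using hasDerivAt_pow 2 x
    have hD1 : HasDerivAt (fun y : ℝ => kummerM (α / 2 + 1 / 2) (1 / 2) (y ^ 2))
        ((α / 2 + 1 / 2) / (1 / 2) * kummerM (α / 2 + 1 / 2 + 1) (1 / 2 + 1) (x ^ 2) * (2 * x))
        x :=
      by have := (KumAux.hasDerivAt_kummerM (b := 1 / 2) ha₁ (by norm_num) (x ^ 2)).comp x hx2; exact this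
    have hD2b : HasDerivAt (fun y : ℝ => kummerM (α / 2 + 1) (3 / 2) (y ^ 2))
        ((α / 2 + 1) / (3 / 2) * kummerM (α / 2 + 1 + 1) (3 / 2 + 1) (x ^ 2) * (2 * x)) x :=
      by have := (KumAux.hasDerivAt_kummerM (b := 3 / 2) ha₂ (by norm_num) (x ^ 2)).comp x hx2; exact this
    have hDlin : HasDerivAt (fun y : ℝ => 2 * (Real.sqrt d * h₀ / k) * y)
        (2 * (Real.sqrt d * h₀ / k)) x := by
      simpa using (hasDerivAt_id x).const_mul (2 * (Real.sqrt d * h₀ / k))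
    have hD2 : HasDerivAt
        (fun y : ℝ => 2 * (Real.sqrt d * h₀ / k) * y * kummerM (α / 2 + 1) (3 / 2) (y ^ 2))
        (2 * (Real.sqrt d * h₀ / k) * kummerM (α / 2 + 1) (3 / 2) (x ^ 2)
          + 2 * (Real.sqrt d * h₀ / k) * x
            * ((α / 2 + 1) / (3 / 2) * kummerM (α / 2 + 1 + 1) (3 / 2 + 1) (x ^ 2) * (2 * x))) x :=
      hDlin.mul hD2b
    have hg : HasDerivAt g
        ((α / 2 + 1 / 2) / (1 / 2) * kummerM (α / 2 + 1 / 2 + 1) (1 / 2 + 1) (x ^ 2) * (2 * x)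
          + (2 * (Real.sqrt d * h₀ / k) * kummerM (α / 2 + 1) (3 / 2) (x ^ 2)
            + 2 * (Real.sqrt d * h₀ / k) * x
              * ((α / 2 + 1) / (3 / 2) * kummerM (α / 2 + 1 + 1) (3 / 2 + 1) (x ^ 2) * (2 * x))))
        x := hD1.add hD2
    have hid := KumAux.kummer_id (a := α / 2 + 1) ha₂ (x ^ 2)
    have hgx := hgpos x hx
    have hDN : (α / 2 + 1 / 2) / (1 / 2) * kummerM (α / 2 + 1 / 2 + 1) (1 / 2 + 1) (x ^ 2) * (2 * x)
          + (2 * (Real.sqrt d * h₀ / k) * kummerM (α / 2 + 1) (3 / 2) (x ^ 2)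
            + 2 * (Real.sqrt d * h₀ / k) * x
              * ((α / 2 + 1) / (3 / 2) * kummerM (α / 2 + 1 + 1) (3 / 2 + 1) (x ^ 2) * (2 * x)))
        = 2 * (α + 1) * x * kummerM (α / 2 + 3 / 2) (3 / 2) (x ^ 2)
            + 2 * (Real.sqrt d / k) * h₀ * kummerM (α / 2 + 1) (1 / 2) (x ^ 2) := by
      rw [show (α / 2 + 1 / 2 + 1 : ℝ) = α / 2 + 3 / 2 by ring,
        show ((1:ℝ) / 2 + 1 : ℝ) = 3 / 2 by norm_num,
        show ((3:ℝ) / 2 + 1 : ℝ) = 5 / 2 by norm_num, hid]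
      ring
    have hinv : HasDerivAt (fun y : ℝ => (g y)⁻¹)
        (-((α / 2 + 1 / 2) / (1 / 2) * kummerM (α / 2 + 1 / 2 + 1) (1 / 2 + 1) (x ^ 2) * (2 * x)
          + (2 * (Real.sqrt d * h₀ / k) * kummerM (α / 2 + 1) (3 / 2) (x ^ 2)
            + 2 * (Real.sqrt d * h₀ / k) * x
              * ((α / 2 + 1) / (3 / 2) * kummerM (α / 2 + 1 + 1) (3 / 2 + 1) (x ^ 2) * (2 * x))))
          / (g x) ^ 2) x := hg.inv hgx.ne'
    have heq : f₁ =ᶠ[nhds x] fun y : ℝ => (g y)⁻¹ := by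
      filter_upwards [isOpen_Ioi.mem_nhds (show x ∈ Set.Ioi 0 from hx)] with y hy
      rw [hf₁ y hy, one_div, hgdef]
    have hder := hinv.congr_of_eventuallyEq heq
    have hval : f₁ x = (g x)⁻¹ := by rw [hf₁ x hx, one_div, hgdef]
    have hfinal :
        (-((α / 2 + 1 / 2) / (1 / 2) * kummerM (α / 2 + 1 / 2 + 1) (1 / 2 + 1) (x ^ 2) * (2 * x)
          + (2 * (Real.sqrt d * h₀ / k) * kummerM (α / 2 + 1) (3 / 2) (x ^ 2)
            + 2 * (Real.sqrt d * h₀ / k) * x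
              * ((α / 2 + 1) / (3 / 2) * kummerM (α / 2 + 1 + 1) (3 / 2 + 1) (x ^ 2) * (2 * x))))
          / (g x) ^ 2)
        = -(2 * (α + 1) * x * kummerM (α / 2 + 3 / 2) (3 / 2) (x ^ 2)
            + 2 * (Real.sqrt d / k) * h₀ * kummerM (α / 2 + 1) (1 / 2) (x ^ 2)) * (f₁ x) ^ 2 := by
      rw [hDN, hval, inv_pow, ← div_eq_mul_inv]
    rw [hfinal] at hder
    exact hder
  have hderivneg : ∀ x : ℝ, 0 < x → deriv f₁ x < 0 := by
    intro x hx
    rw [(key x hx).deriv]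
    have hM3 := KumAux.one_le_kummerM (a := α / 2 + 3 / 2) (b := 3/2) (by linarith) (by norm_num)
      (sq_nonneg x)
    have hM1 := KumAux.one_le_kummerM (a := α / 2 + 1) (b := 1/2) ha₂ (by norm_num) (sq_nonneg x)
    have hNpos : 0 < 2 * (α + 1) * x * kummerM (α / 2 + 3 / 2) (3 / 2) (x ^ 2)
        + 2 * (Real.sqrt d / k) * h₀ * kummerM (α / 2 + 1) (1 / 2) (x ^ 2) := by
      have h1 : 0 < 2 * (α + 1) * x := by positivity
      have h2 : 0 < 2 * (Real.sqrt d / k) * h₀ := by positivity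
      nlinarith
    have hfpos : 0 < f₁ x := by
      rw [hf₁ x hx]
      have := hgpos x hx
      rw [hgdef] at this
      positivity
    exact mul_neg_of_neg_of_pos (by linarith) (by positivity)
  refine ⟨fun x hx => ⟨key x hx, hderivneg x hx⟩, ?_⟩
  apply strictAntiOn_of_deriv_neg (convex_Ioi 0)
  · exact fun x hx => (key x hx).continuousAt.continuousWithinAt
  · intro x hx
    rw [interior_Ioi] at hx
    exact hderivneg x hx
end

section
/- Let α ≥ 0, d > 0, k > 0, γ > 0, h₀ > 0, T_∞ > 0. Then there exists a unique ν > 0 such that h₀ T_∞ / (γ 2^α d^{(α+1)/2}) = ν^{α+1} [ M(α/2 + 1/2, 1/2, ν²) + 2(√d h₀/k) ν M(α/2 + 1, 3/2, ν²) ]. -/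
open Real Filter Topology

private lemma poch_nonneg {a : ℝ} (ha : 0 ≤ a) (s : ℕ) : 0 ≤ (ascPochhammer ℝ s).eval a := by
  induction s with
  | zero => simp
  | succ n ih =>
    rw [ascPochhammer_succ_eval]
    exact mul_nonneg ih (add_nonneg ha (Nat.cast_nonneg n))

private lemma poch_le {a b : ℝ} (ha : 0 ≤ a) (hb : 0 < b) (s : ℕ) :
    (ascPochhammer ℝ s).eval a ≤ ((a + b) / b) ^ s * (ascPochhammer ℝ s).eval b := by
  induction s with
  | zero => simp
  | succ n ih =>
    rw [ascPochhammer_succ_eval, ascPochhammer_succ_eval, pow_succ]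
    have hn : (0:ℝ) ≤ (n : ℝ) := Nat.cast_nonneg n
    have h1 : a + n ≤ (a + b) / b * (b + n) := by
      rw [div_mul_eq_mul_div, le_div_iff₀ hb]
      nlinarith
    have h2 : (0:ℝ) ≤ ((a + b) / b) ^ n * (ascPochhammer ℝ n).eval b :=
      mul_nonneg (pow_nonneg (by positivity) n) (poch_nonneg hb.le n)
    calc (ascPochhammer ℝ n).eval a * (a + n)
        ≤ ((a + b) / b) ^ n * (ascPochhammer ℝ n).eval b * ((a + b) / b * (b + n)) :=
          mul_le_mul ih h1 (add_nonneg ha hn) h2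
      _ = ((a + b) / b) ^ n * ((a + b) / b) * ((ascPochhammer ℝ n).eval b * (b + n)) := by ring

private lemma kummer_term_nonneg {a b : ℝ} (ha : 0 ≤ a) (hb : 0 < b) {z : ℝ} (hz : 0 ≤ z)
    (s : ℕ) :
    0 ≤ ((ascPochhammer ℝ s).eval a / ((ascPochhammer ℝ s).eval b * (Nat.factorial s : ℝ)))
        * z ^ s := by
  have := poch_nonneg ha s
  have := (poch_nonneg hb.le s)
  positivity

private lemma kummer_term_le {a b : ℝ} (ha : 0 ≤ a) (hb : 0 < b) {z : ℝ} (hz : 0 ≤ z) (s : ℕ) :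
    ((ascPochhammer ℝ s).eval a / ((ascPochhammer ℝ s).eval b * (Nat.factorial s : ℝ))) * z ^ s
      ≤ ((a + b) / b * z) ^ s / (Nat.factorial s : ℝ) := by
  have hP : (0:ℝ) < (ascPochhammer ℝ s).eval b := ascPochhammer_pos s b hb
  have hf : (0:ℝ) < (Nat.factorial s : ℝ) := by exact_mod_cast Nat.factorial_pos s
  have h1 : ((ascPochhammer ℝ s).eval a / ((ascPochhammer ℝ s).eval b * (Nat.factorial s : ℝ)))
        * z ^ s
      ≤ (((a + b) / b) ^ s * (ascPochhammer ℝ s).eval b /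
          ((ascPochhammer ℝ s).eval b * (Nat.factorial s : ℝ))) * z ^ s := by
    gcongr <;> first | exact poch_le ha hb s | positivity
  refine h1.trans_eq ?_
  rw [mul_pow]
  field_simp

private lemma kummer_summable {a b : ℝ} (ha : 0 ≤ a) (hb : 0 < b) {z : ℝ} (hz : 0 ≤ z) :
    Summable fun s : ℕ =>
      ((ascPochhammer ℝ s).eval a / ((ascPochhammer ℝ s).eval b * (Nat.factorial s : ℝ)))
        * z ^ s :=
  Summable.of_nonneg_of_le (kummer_term_nonneg ha hb hz) (kummer_term_le ha hb hz)
    (Real.summable_pow_div_factorial ((a + b) / b * z))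

private lemma one_le_kummer {a b : ℝ} (ha : 0 ≤ a) (hb : 0 < b) {z : ℝ} (hz : 0 ≤ z) :
    1 ≤ kummerM a b z := by
  have h := Summable.le_tsum (kummer_summable ha hb hz) 0
    (fun s _ => kummer_term_nonneg ha hb hz s)
  simpa [kummerM] using h

private lemma kummer_mono {a b : ℝ} (ha : 0 ≤ a) (hb : 0 < b) {z w : ℝ} (hz : 0 ≤ z)
    (hzw : z ≤ w) : kummerM a b z ≤ kummerM a b w := by
  refine Summable.tsum_le_tsum (fun s => ?_) (kummer_summable ha hb hz)
    (kummer_summable ha hb (hz.trans hzw))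
  have hcoef : 0 ≤ (ascPochhammer ℝ s).eval a /
      ((ascPochhammer ℝ s).eval b * (Nat.factorial s : ℝ)) := by
    have := poch_nonneg ha s
    have := poch_nonneg hb.le s
    positivity
  exact mul_le_mul_of_nonneg_left (pow_le_pow_left₀ hz hzw s) hcoef

private lemma kummer_continuousOn {a b : ℝ} (ha : 0 ≤ a) (hb : 0 < b) {R : ℝ} (hR : 0 ≤ R) :
    ContinuousOn (kummerM a b) (Set.Icc 0 R) := by
  have hr : (0:ℝ) ≤ (a + b) / b := by positivity
  refine (tendstoUniformlyOn_tsum_nat (f := fun s z =>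
      ((ascPochhammer ℝ s).eval a / ((ascPochhammer ℝ s).eval b * (Nat.factorial s : ℝ)))
        * z ^ s)
      (u := fun s => ((a + b) / b * R) ^ s / (Nat.factorial s : ℝ))
      (Real.summable_pow_div_factorial _) ?_).continuousOn ?_
  · intro s z hz
    rw [Real.norm_of_nonneg (kummer_term_nonneg ha hb hz.1 s)]
    refine (kummer_term_le ha hb hz.1 s).trans ?_
    have hf : (0:ℝ) < (Nat.factorial s : ℝ) := by exact_mod_cast Nat.factorial_pos s
    exact (div_le_div_iff_of_pos_right hf).2 (pow_le_pow_left₀ (mul_nonneg hr hz.1)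
      (mul_le_mul_of_nonneg_left hz.2 hr) s)
  · refine Filter.Frequently.of_forall fun n => ?_
    exact (continuousOn_finset_sum _ fun s _ => (continuous_const.mul (continuous_pow s)).continuousOn)

/-- existence and uniqueness of the free-boundary coefficient for the
convective problem (P1). -/
theorem exists_unique_nu_P1 (α d k γ h₀ Tinf : ℝ)
    (hα : 0 ≤ α) (hd : 0 < d) (hk : 0 < k) (hγ : 0 < γ) (hh : 0 < h₀) (hT : 0 < Tinf) :
    ∃! ν : ℝ, 0 < ν ∧
      h₀ * Tinf / (γ * 2 ^ α * d ^ ((α + 1) / 2))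
        = ν ^ (α + 1) * (kummerM (α / 2 + 1 / 2) (1 / 2) (ν ^ 2)
            + 2 * (Real.sqrt d * h₀ / k) * ν * kummerM (α / 2 + 1) (3 / 2) (ν ^ 2)) := by
  have ha1 : (0:ℝ) ≤ α / 2 + 1 / 2 := by linarith
  have hb1 : (0:ℝ) < 1 / 2 := by norm_num
  have ha2 : (0:ℝ) ≤ α / 2 + 1 := by linarith
  have hb2 : (0:ℝ) < 3 / 2 := by norm_num
  have hp : (0:ℝ) < α + 1 := by linarith
  set c : ℝ := 2 * (Real.sqrt d * h₀ / k) with hcdef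
  have hc : 0 ≤ c := by
    have := Real.sqrt_nonneg d
    positivity
  set F : ℝ → ℝ := fun ν => ν ^ (α + 1) * (kummerM (α / 2 + 1 / 2) (1 / 2) (ν ^ 2)
      + c * ν * kummerM (α / 2 + 1) (3 / 2) (ν ^ 2)) with hFdef
  set C : ℝ := h₀ * Tinf / (γ * 2 ^ α * d ^ ((α + 1) / 2)) with hCdef
  have hC : 0 < C := by
    have h2 : (0:ℝ) < (2:ℝ) ^ α := Real.rpow_pos_of_pos (by norm_num) α
    have hdp : (0:ℝ) < d ^ ((α + 1) / 2) := Real.rpow_pos_of_pos hd _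
    positivity
  -- the bracket g
  have hg_ge : ∀ ν : ℝ, 0 ≤ ν → 1 ≤ kummerM (α / 2 + 1 / 2) (1 / 2) (ν ^ 2)
      + c * ν * kummerM (α / 2 + 1) (3 / 2) (ν ^ 2) := by
    intro ν hν
    have h1 := one_le_kummer ha1 hb1 (z := ν ^ 2) (by positivity)
    have h2 : 0 ≤ c * ν * kummerM (α / 2 + 1) (3 / 2) (ν ^ 2) :=
      mul_nonneg (mul_nonneg hc hν)
        (le_trans zero_le_one (one_le_kummer ha2 hb2 (by positivity)))
    linarith
  have hg_mono : ∀ x y : ℝ, 0 ≤ x → x ≤ y →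
      kummerM (α / 2 + 1 / 2) (1 / 2) (x ^ 2) + c * x * kummerM (α / 2 + 1) (3 / 2) (x ^ 2)
        ≤ kummerM (α / 2 + 1 / 2) (1 / 2) (y ^ 2)
          + c * y * kummerM (α / 2 + 1) (3 / 2) (y ^ 2) := by
    intro x y hx hxy
    have hsq : x ^ 2 ≤ y ^ 2 := by nlinarith
    have h1 := kummer_mono ha1 hb1 (z := x ^ 2) (by positivity) hsq
    have h2 : c * x * kummerM (α / 2 + 1) (3 / 2) (x ^ 2)
        ≤ c * y * kummerM (α / 2 + 1) (3 / 2) (y ^ 2) := by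
      have hk1 := kummer_mono ha2 hb2 (z := x ^ 2) (by positivity) hsq
      have hk0 : (0:ℝ) ≤ kummerM (α / 2 + 1) (3 / 2) (x ^ 2) :=
        le_trans zero_le_one (one_le_kummer ha2 hb2 (by positivity))
      have : c * x ≤ c * y := mul_le_mul_of_nonneg_left hxy hc
      exact mul_le_mul this hk1 hk0 (mul_nonneg hc (hx.trans hxy))
    linarith
  -- strict monotonicity of F on [0, ∞)
  have hFmono : StrictMonoOn F (Set.Ici (0:ℝ)) := by
    intro x hx y hy hxy
    simp only [hFdef]
    have hxp : x ^ (α + 1) < y ^ (α + 1) := Real.rpow_lt_rpow hx hxy hp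
    have hxpn : 0 ≤ x ^ (α + 1) := Real.rpow_nonneg hx _
    have hgy : 0 < kummerM (α / 2 + 1 / 2) (1 / 2) (y ^ 2)
        + c * y * kummerM (α / 2 + 1) (3 / 2) (y ^ 2) :=
      lt_of_lt_of_le zero_lt_one (hg_ge y hy)
    calc x ^ (α + 1) * (kummerM (α / 2 + 1 / 2) (1 / 2) (x ^ 2)
          + c * x * kummerM (α / 2 + 1) (3 / 2) (x ^ 2))
        ≤ x ^ (α + 1) * (kummerM (α / 2 + 1 / 2) (1 / 2) (y ^ 2)
          + c * y * kummerM (α / 2 + 1) (3 / 2) (y ^ 2)) :=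
          mul_le_mul_of_nonneg_left (hg_mono x y hx hxy.le) hxpn
      _ < y ^ (α + 1) * (kummerM (α / 2 + 1 / 2) (1 / 2) (y ^ 2)
          + c * y * kummerM (α / 2 + 1) (3 / 2) (y ^ 2)) :=
          mul_lt_mul_of_pos_right hxp hgy
  have hF0 : F 0 = 0 := by
    simp only [hFdef]
    rw [Real.zero_rpow hp.ne', zero_mul]
  -- choose R with F R ≥ C
  set R : ℝ := max 1 C with hRdef
  have hR1 : (1:ℝ) ≤ R := le_max_left _ _
  have hR0 : (0:ℝ) ≤ R := by linarith
  have hFR : C ≤ F R := by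
    have h1 : C ≤ R := le_max_right _ _
    have h2 : R ≤ R ^ (α + 1) := by
      calc R = R ^ (1:ℝ) := (Real.rpow_one R).symm
        _ ≤ R ^ (α + 1) := Real.rpow_le_rpow_of_exponent_le hR1 (by linarith)
    have h3 : R ^ (α + 1) * 1 ≤ F R :=
      mul_le_mul_of_nonneg_left (hg_ge R hR0) (Real.rpow_nonneg hR0 _)
    rw [mul_one] at h3
    linarith
  -- continuity of F on [0, R]
  have hFcont : ContinuousOn F (Set.Icc 0 R) := by
    have hmaps : Set.MapsTo (fun ν : ℝ => ν ^ 2) (Set.Icc 0 R) (Set.Icc 0 (R ^ 2)) := by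
      intro x hx
      simp only [Set.mem_Icc]
      exact ⟨by positivity, by nlinarith [hx.1, hx.2]⟩
    have hsq : ContinuousOn (fun ν : ℝ => ν ^ 2) (Set.Icc 0 R) := (continuous_pow 2).continuousOn
    have h1 : ContinuousOn (fun ν : ℝ => kummerM (α / 2 + 1 / 2) (1 / 2) (ν ^ 2))
        (Set.Icc 0 R) := (kummer_continuousOn ha1 hb1 (by positivity)).comp hsq hmaps
    have h2 : ContinuousOn (fun ν : ℝ => kummerM (α / 2 + 1) (3 / 2) (ν ^ 2))
        (Set.Icc 0 R) := (kummer_continuousOn ha2 hb2 (by positivity)).comp hsq hmaps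
    have hrpow : Continuous (fun ν : ℝ => ν ^ (α + 1)) :=
      continuous_iff_continuousAt.2 fun x =>
        Real.continuousAt_rpow_const x _ (Or.inr hp.le)
    exact hrpow.continuousOn.mul
      (h1.add (((continuousOn_const.mul continuousOn_id).mul h2)))
  -- existence via IVT
  have hmem : C ∈ Set.Icc (F 0) (F R) := ⟨by rw [hF0]; exact hC.le, hFR⟩
  obtain ⟨ν, hνmem, hνeq⟩ := intermediate_value_Icc hR0 hFcont hmem
  have hνpos : 0 < ν := by
    rcases lt_or_eq_of_le hνmem.1 with h | h
    · exact h
    · exfalso; rw [← h, hF0] at hνeq; exact hC.ne' hνeq.symm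
  refine ⟨ν, ⟨hνpos, hνeq.symm⟩, ?_⟩
  rintro y ⟨hy, hyeq⟩
  have hFy : F y = F ν := by rw [hνeq]; exact hyeq.symm
  exact hFmono.injOn (Set.mem_Ici.2 hy.le) (Set.mem_Ici.2 hνpos.le) hFy
end

section
/- Let α ≥ 0, d > 0, k > 0, γ > 0, c > 0. Then there exists a unique λ > 0 such that c / (γ 2^α d^{(α+1)/2}) = λ^{α+1} M(α/2 + 1/2, 1/2, λ²). -/
open Real Filter Topology

namespace KummerAux

noncomputable def kc (a b : ℝ) (s : ℕ) : ℝ :=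
  (ascPochhammer ℝ s).eval a / ((ascPochhammer ℝ s).eval b * (Nat.factorial s : ℝ))

lemma kc_pos {a b : ℝ} (ha : 0 < a) (hb : 0 < b) (s : ℕ) : 0 < kc a b s :=
  div_pos (ascPochhammer_pos _ _ ha)
    (mul_pos (ascPochhammer_pos _ _ hb) (by exact_mod_cast s.factorial_pos))

lemma kc_succ {a b : ℝ} (hb : 0 < b) (s : ℕ) :
    kc a b (s + 1) = kc a b s * ((a + s) / ((b + s) * (s + 1))) := by
  have hb' : (0:ℝ) < (ascPochhammer ℝ s).eval b := ascPochhammer_pos _ _ hb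
  have hf : (0:ℝ) < (s.factorial : ℝ) := by exact_mod_cast s.factorial_pos
  have hbs : (0:ℝ) < b + s := by positivity
  have hs1 : (0:ℝ) < (s:ℝ) + 1 := by positivity
  have h1 : (ascPochhammer ℝ s).eval b ≠ 0 := hb'.ne'
  have h2 : (s.factorial : ℝ) ≠ 0 := hf.ne'
  have h3 : b + (s:ℝ) ≠ 0 := hbs.ne'
  have h4 : (s:ℝ) + 1 ≠ 0 := hs1.ne'
  simp only [kc, ascPochhammer_succ_right, Polynomial.eval_mul, Polynomial.eval_add,
    Polynomial.eval_X, Polynomial.eval_natCast, Nat.factorial_succ, Nat.cast_mul,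
    Nat.cast_add, Nat.cast_one]
  rw [div_mul_div_comm]
  congr 1
  ring

lemma summable_kc {a b : ℝ} (ha : 0 < a) (hb : 0 < b) (z : ℝ) :
    Summable (fun s : ℕ => kc a b s * z ^ s) := by
  apply summable_of_ratio_norm_eventually_le (r := 1/2) (by norm_num)
  filter_upwards [eventually_ge_atTop (⌈2 * (a + 1) * |z|⌉₊ + 1)] with n hn
  have hn1 : (1:ℕ) ≤ n := le_trans (Nat.le_add_left 1 _) hn
  have hn1' : (1:ℝ) ≤ (n:ℝ) := by exact_mod_cast hn1
  have hceil : 2 * (a + 1) * |z| ≤ (n:ℝ) := by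
    calc 2 * (a + 1) * |z| ≤ (⌈2 * (a + 1) * |z|⌉₊ : ℝ) := Nat.le_ceil _
    _ ≤ (n:ℝ) := by exact_mod_cast le_trans (Nat.le_add_right _ 1) hn
  have hkc := kc_pos ha hb n
  have key : (a + n) * |z| ≤ (1/2) * ((b + n) * (n + 1)) := by
    have h1 : a + (n:ℝ) ≤ (a + 1) * n := by nlinarith
    have h2 : (a + 1) * n * |z| ≤ (n:ℝ) * ((1/2) * (n + 1)) := by
      nlinarith [abs_nonneg z, mul_le_mul_of_nonneg_right hceil (abs_nonneg z)]
    have h3 : (n:ℝ) ≤ b + n := by linarith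
    nlinarith [abs_nonneg z, mul_le_mul_of_nonneg_right h1 (abs_nonneg z)]
  rw [kc_succ hb]
  have hbn : (0:ℝ) < (b + n) * (n + 1) := by positivity
  have habs : ‖kc a b n * ((a + n) / ((b + n) * (n + 1))) * z ^ (n + 1)‖
      = ‖kc a b n * z ^ n‖ * ((a + n) * |z| / ((b + n) * (n + 1))) := by
    simp only [Real.norm_eq_abs, abs_mul, abs_div, pow_succ]
    rw [abs_of_nonneg (by positivity : (0:ℝ) ≤ a + n),
      abs_of_pos (show (0:ℝ) < b + n by positivity),
      abs_of_pos (show (0:ℝ) < (n:ℝ) + 1 by positivity)]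
    ring
  rw [habs]
  rw [mul_comm ((1:ℝ)/2)]
  apply mul_le_mul_of_nonneg_left _ (norm_nonneg _)
  rw [div_le_iff₀ hbn]
  linarith [key]

lemma kummerM_eq (a b z : ℝ) : kummerM a b z = ∑' s : ℕ, kc a b s * z ^ s := rfl

lemma one_le_kummerM {a b z : ℝ} (ha : 0 < a) (hb : 0 < b) (hz : 0 ≤ z) :
    1 ≤ kummerM a b z := by
  rw [kummerM_eq]
  have h0 : kc a b 0 * z ^ 0 = 1 := by simp [kc]
  calc (1:ℝ) = kc a b 0 * z ^ 0 := h0.symm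
  _ ≤ ∑' s : ℕ, kc a b s * z ^ s :=
      Summable.le_tsum (summable_kc ha hb z) 0
        (fun i _ => mul_nonneg (kc_pos ha hb i).le (pow_nonneg hz i))

lemma kummerM_mono {a b x y : ℝ} (ha : 0 < a) (hb : 0 < b) (hx : 0 ≤ x) (hxy : x ≤ y) :
    kummerM a b x ≤ kummerM a b y := by
  rw [kummerM_eq, kummerM_eq]
  refine Summable.tsum_le_tsum (fun s => ?_) (summable_kc ha hb x) (summable_kc ha hb y)
  exact mul_le_mul_of_nonneg_left (pow_le_pow_left₀ hx hxy s) (kc_pos ha hb s).le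

lemma kummerM_continuousOn {a b : ℝ} (ha : 0 < a) (hb : 0 < b) (R : ℝ) (hR : 0 ≤ R) :
    ContinuousOn (kummerM a b) (Set.Icc (-R) R) := by
  show ContinuousOn (fun z => ∑' s : ℕ, kc a b s * z ^ s) (Set.Icc (-R) R)
  apply continuousOn_tsum (u := fun s => kc a b s * R ^ s)
    (fun s => (continuous_const.mul (continuous_pow s)).continuousOn)
    (summable_kc ha hb R)
  intro n x hx
  have hxR : |x| ≤ R := abs_le.2 ⟨hx.1, hx.2⟩
  have := kc_pos ha hb n
  show ‖kc a b n * x ^ n‖ ≤ kc a b n * R ^ n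
  rw [Real.norm_eq_abs, abs_mul, abs_of_pos this, abs_pow]
  exact mul_le_mul_of_nonneg_left (pow_le_pow_left₀ (abs_nonneg x) hxR n) this.le

end KummerAux

/-- unique free-boundary coefficient for the flux problem (P3). -/
theorem exists_unique_lambda_P3 (α d k γ c : ℝ)
    (hα : 0 ≤ α) (hd : 0 < d) (hk : 0 < k) (hγ : 0 < γ) (hc : 0 < c) :
    ∃! l : ℝ, 0 < l ∧
      c / (γ * 2 ^ α * d ^ ((α + 1) / 2))
        = l ^ (α + 1) * kummerM (α / 2 + 1 / 2) (1 / 2) (l ^ 2) := by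
  open KummerAux in
  set a : ℝ := α / 2 + 1 / 2 with ha_def
  have ha : 0 < a := by positivity
  have hb : (0:ℝ) < 1/2 := by norm_num
  set C : ℝ := c / (γ * 2 ^ α * d ^ ((α + 1) / 2)) with hC_def
  have hC : 0 < C := by
    apply div_pos hc
    have h2 : (0:ℝ) < (2:ℝ) ^ α := Real.rpow_pos_of_pos (by norm_num) α
    have hd' : (0:ℝ) < d ^ ((α + 1) / 2) := Real.rpow_pos_of_pos hd _
    positivity
  set f : ℝ → ℝ := fun l => l ^ (α + 1) * kummerM a (1/2) (l ^ 2) with hf_def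
  have hα1 : (1:ℝ) ≤ α + 1 := by linarith
  -- f is strictly monotone on positives
  have hmono : ∀ x y : ℝ, 0 < x → x < y → f x < f y := by
    intro x y hx hxy
    have hy : 0 < y := hx.trans hxy
    have h1 : x ^ (α + 1) < y ^ (α + 1) :=
      Real.rpow_lt_rpow hx.le hxy (by linarith)
    have h2 : kummerM a (1/2) (x ^ 2) ≤ kummerM a (1/2) (y ^ 2) :=
      kummerM_mono ha hb (by positivity) (by nlinarith)
    have h3 : (1:ℝ) ≤ kummerM a (1/2) (x ^ 2) := one_le_kummerM ha hb (by positivity)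
    have h4 : (0:ℝ) < y ^ (α + 1) := Real.rpow_pos_of_pos hy _
    calc f x = x ^ (α + 1) * kummerM a (1/2) (x ^ 2) := rfl
    _ < y ^ (α + 1) * kummerM a (1/2) (x ^ 2) :=
        mul_lt_mul_of_pos_right h1 (by linarith)
    _ ≤ y ^ (α + 1) * kummerM a (1/2) (y ^ 2) := mul_le_mul_of_nonneg_left h2 h4.le
    _ = f y := rfl
  -- choose endpoints
  set M1 : ℝ := kummerM a (1/2) 1 with hM1_def
  have hM1 : (1:ℝ) ≤ M1 := one_le_kummerM ha hb (by norm_num)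
  set ε : ℝ := min 1 (C / (2 * M1)) with hε_def
  have hε0 : 0 < ε := lt_min one_pos (by positivity)
  have hε1 : ε ≤ 1 := min_le_left _ _
  have hfε : f ε < C := by
    have h1 : ε ^ (α + 1) ≤ ε ^ (1:ℝ) :=
      Real.rpow_le_rpow_of_exponent_ge hε0 hε1 hα1
    rw [Real.rpow_one] at h1
    have h2 : kummerM a (1/2) (ε ^ 2) ≤ M1 :=
      kummerM_mono ha hb (by positivity) (by nlinarith)
    have h3 : (0:ℝ) ≤ kummerM a (1/2) (ε ^ 2) :=
      le_trans zero_le_one (one_le_kummerM ha hb (by positivity))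
    have h4 : f ε ≤ ε * M1 := mul_le_mul h1 h2 h3 (by linarith [hε0.le])
    have h5 : ε ≤ C / (2 * M1) := min_le_right _ _
    have h6 : ε * M1 ≤ C / 2 := by
      rw [div_mul_eq_div_div] at h5
      have := mul_le_mul_of_nonneg_right h5 (by linarith : (0:ℝ) ≤ M1)
      calc ε * M1 ≤ C / 2 / M1 * M1 := this
      _ = C / 2 := div_mul_cancel₀ _ (by linarith : M1 ≠ 0)
    linarith
  set R : ℝ := max 1 (C + 1) with hR_def
  have hR1 : (1:ℝ) ≤ R := le_max_left _ _
  have hfR : C < f R := by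
    have h1 : R ^ (1:ℝ) ≤ R ^ (α + 1) :=
      Real.rpow_le_rpow_of_exponent_le hR1 hα1
    rw [Real.rpow_one] at h1
    have h2 : (1:ℝ) ≤ kummerM a (1/2) (R ^ 2) := one_le_kummerM ha hb (by positivity)
    have h3 : (0:ℝ) < R ^ (α + 1) := Real.rpow_pos_of_pos (by linarith) _
    have h4 : R ≤ f R := by
      calc R ≤ R ^ (α + 1) := h1
      _ = R ^ (α + 1) * 1 := (mul_one _).symm
      _ ≤ R ^ (α + 1) * kummerM a (1/2) (R ^ 2) := mul_le_mul_of_nonneg_left h2 h3.le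
    have : C + 1 ≤ R := le_max_right _ _
    linarith
  have hεR : ε ≤ R := le_trans hε1 hR1
  -- continuity of f on [ε, R]
  have hcont : ContinuousOn f (Set.Icc ε R) := by
    apply ContinuousOn.mul
    · intro x hx
      have hx0 : 0 < x := lt_of_lt_of_le hε0 hx.1
      exact (Real.continuousAt_rpow_const x (α + 1) (Or.inl hx0.ne')).continuousWithinAt
    · have hsub : Set.MapsTo (fun l : ℝ => l ^ 2) (Set.Icc ε R) (Set.Icc (-(R^2)) (R^2)) := by
        intro x hx
        simp only [Set.mem_Icc] at hx
        have hx0 : 0 < x := lt_of_lt_of_le hε0 hx.1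
        have h1 : -R^2 ≤ x^2 := by nlinarith [sq_nonneg x, sq_nonneg R]
        have h2 : x^2 ≤ R^2 := by nlinarith [hx.2, hx0.le]
        exact ⟨h1, h2⟩
      exact (kummerM_continuousOn ha hb (R^2) (by positivity)).comp
        (continuous_pow 2).continuousOn hsub
  obtain ⟨l, hl, hfl⟩ := intermediate_value_Icc hεR hcont ⟨hfε.le, hfR.le⟩
  refine ⟨l, ⟨lt_of_lt_of_le hε0 hl.1, hfl.symm⟩, ?_⟩
  rintro y ⟨hy0, hy⟩
  have hl0 : 0 < l := lt_of_lt_of_le hε0 hl.1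
  have hyf : f y = C := hy.symm
  rcases lt_trichotomy y l with h | h | h
  · have := hmono y l hy0 h
    rw [hyf, hfl] at this
    exact absurd this (lt_irrefl C)
  · exact h
  · have := hmono l y hl0 h
    rw [hyf, hfl] at this
    exact absurd this (lt_irrefl C)
end

section
/- Fix α ≥ 0, d > 0, k > 0, γ > 0, T_∞ > 0. For each h₀ > 0 let ν_{h₀} be the unique positive solution of h₀T_∞/(γ2^α d^{(α+1)/2}) = x^{α+1}[M(α/2+1/2,1/2,x²) + 2(√d h₀/k) x M(α/2+1,3/2,x²)], and let ν_∞ be the unique positive solution of kT_∞/(2^{α+1} d^{α/2+1} γ) = x^{α+2} M(α/2+1,3/2,x²). Then ν_{h₀} → ν_∞ as h₀ → +∞. -/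
open Real Filter Topology

noncomputable def kumTerm (a b z : ℝ) (s : ℕ) : ℝ :=
  ((ascPochhammer ℝ s).eval a / ((ascPochhammer ℝ s).eval b * (Nat.factorial s : ℝ))) * z ^ s

lemma kummerM_eq (a b z : ℝ) : kummerM a b z = ∑' s, kumTerm a b z s := rfl

lemma kumTerm_nonneg {a b z : ℝ} (ha : 0 < a) (hb : 0 < b) (hz : 0 ≤ z) (s : ℕ) :
    0 ≤ kumTerm a b z s := by
  have h1 := ascPochhammer_pos s a ha
  have h2 := ascPochhammer_pos s b hb
  have : (0:ℝ) < (Nat.factorial s : ℝ) := by positivity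
  unfold kumTerm
  positivity

lemma poch_ratio_le {a b : ℝ} (ha : 0 < a) (hb : 0 < b) (s : ℕ) :
    (ascPochhammer ℝ s).eval a ≤ (max (a/b) 1) ^ s * (ascPochhammer ℝ s).eval b := by
  induction s with
  | zero => simp
  | succ n ih =>
    have h2 := ascPochhammer_pos n b hb
    have hM : 0 ≤ max (a/b) 1 := le_trans zero_le_one (le_max_right _ _)
    rw [ascPochhammer_succ_eval, ascPochhammer_succ_eval, pow_succ]
    have hkey : a + n ≤ max (a/b) 1 * (b + n) := by
      have h1 : a ≤ max (a/b) 1 * b := by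
        have : a / b ≤ max (a/b) 1 := le_max_left _ _
        calc a = (a/b) * b := by field_simp
        _ ≤ max (a/b) 1 * b := mul_le_mul_of_nonneg_right this hb.le
      have h2' : (n:ℝ) ≤ max (a/b) 1 * n := le_mul_of_one_le_left (Nat.cast_nonneg n) (le_max_right _ _)
      calc a + (n:ℝ) ≤ max (a/b) 1 * b + max (a/b) 1 * n := add_le_add h1 h2'
      _ = max (a/b) 1 * (b + n) := by ring
    calc (ascPochhammer ℝ n).eval a * (a + n)
        ≤ ((max (a/b) 1) ^ n * (ascPochhammer ℝ n).eval b) * (max (a/b) 1 * (b + n)) := by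
          apply mul_le_mul ih hkey _ (by positivity)
          have := ascPochhammer_pos n a ha
          linarith
      _ = (max (a/b) 1) ^ n * max (a/b) 1 * ((ascPochhammer ℝ n).eval b * (b + n)) := by ring

lemma kumTerm_summable {a b z : ℝ} (ha : 0 < a) (hb : 0 < b) (hz : 0 ≤ z) :
    Summable (kumTerm a b z) := by
  set M := max (a/b) 1 with hM
  have hM0 : 0 ≤ M := le_trans zero_le_one (le_max_right _ _)
  refine Summable.of_nonneg_of_le (kumTerm_nonneg ha hb hz)
    (f := fun s => (M * z) ^ s / (Nat.factorial s : ℝ))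
    (fun s => ?_) (Real.summable_pow_div_factorial (M * z))
  show kumTerm a b z s ≤ (M * z) ^ s / (Nat.factorial s : ℝ)
  have h2 := ascPochhammer_pos s b hb
  have hf : (0:ℝ) < (Nat.factorial s : ℝ) := by positivity
  have hr := poch_ratio_le ha hb s
  unfold kumTerm
  rw [mul_pow, div_mul_eq_mul_div, div_le_div_iff₀ (by positivity) hf]
  calc (ascPochhammer ℝ s).eval a * z ^ s * (Nat.factorial s : ℝ)
      ≤ (M ^ s * (ascPochhammer ℝ s).eval b) * z ^ s * (Nat.factorial s : ℝ) := by
        apply mul_le_mul_of_nonneg_right (mul_le_mul_of_nonneg_right hr (by positivity)) hf.le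
    _ = M ^ s * z ^ s * ((ascPochhammer ℝ s).eval b * (Nat.factorial s : ℝ)) := by ring

lemma one_le_kummerM {a b z : ℝ} (ha : 0 < a) (hb : 0 < b) (hz : 0 ≤ z) :
    1 ≤ kummerM a b z := by
  rw [kummerM_eq]
  have h0 : kumTerm a b z 0 = 1 := by
    simp [kumTerm]
  calc (1:ℝ) = kumTerm a b z 0 := h0.symm
    _ ≤ ∑' s, kumTerm a b z s :=
      Summable.le_tsum (kumTerm_summable ha hb hz) 0 (fun s _ => kumTerm_nonneg ha hb hz s)

lemma kummerM_mono {a b z z' : ℝ} (ha : 0 < a) (hb : 0 < b) (hz : 0 ≤ z) (hzz : z ≤ z') :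
    kummerM a b z ≤ kummerM a b z' := by
  rw [kummerM_eq, kummerM_eq]
  apply Summable.tsum_le_tsum _ (kumTerm_summable ha hb hz) (kumTerm_summable ha hb (hz.trans hzz))
  intro s
  unfold kumTerm
  have h1 := ascPochhammer_pos s a ha
  have h2 := ascPochhammer_pos s b hb
  have hf : (0:ℝ) < (Nat.factorial s : ℝ) := by positivity
  exact mul_le_mul_of_nonneg_left (pow_le_pow_left₀ hz hzz s) (by positivity)

noncomputable def gFun (α x : ℝ) : ℝ := x ^ (α+1) * kummerM (α/2+1/2) (1/2) (x^2)
noncomputable def fFun (α x : ℝ) : ℝ := x ^ (α+2) * kummerM (α/2+1) (3/2) (x^2)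

lemma gFun_pos {α x : ℝ} (hα : 0 ≤ α) (hx : 0 < x) : 0 < gFun α x := by
  have h1 : (0:ℝ) < x ^ (α+1) := Real.rpow_pos_of_pos hx _
  have h2 : (1:ℝ) ≤ kummerM (α/2+1/2) (1/2) (x^2) :=
    one_le_kummerM (by linarith) (by norm_num) (sq_nonneg x)
  exact mul_pos h1 (by linarith)

lemma gFun_mono {α x y : ℝ} (hα : 0 ≤ α) (hx : 0 ≤ x) (hxy : x ≤ y) :
    gFun α x ≤ gFun α y := by
  have ha : (0:ℝ) < α/2 + 1/2 := by linarith
  have h1 : x ^ (α+1) ≤ y ^ (α+1) := Real.rpow_le_rpow hx hxy (by linarith)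
  have h2 : kummerM (α/2+1/2) (1/2) (x^2) ≤ kummerM (α/2+1/2) (1/2) (y^2) :=
    kummerM_mono ha (by norm_num) (sq_nonneg x) (pow_le_pow_left₀ hx hxy 2)
  have h3 : (0:ℝ) ≤ kummerM (α/2+1/2) (1/2) (x^2) :=
    le_trans zero_le_one (one_le_kummerM ha (by norm_num) (sq_nonneg x))
  exact mul_le_mul h1 h2 h3 (Real.rpow_nonneg (hx.trans hxy) _)

lemma fFun_mono {α x y : ℝ} (hα : 0 ≤ α) (hx : 0 ≤ x) (hxy : x ≤ y) :
    fFun α x ≤ fFun α y := by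
  have ha : (0:ℝ) < α/2 + 1 := by linarith
  have h1 : x ^ (α+2) ≤ y ^ (α+2) := Real.rpow_le_rpow hx hxy (by linarith)
  have h2 : kummerM (α/2+1) (3/2) (x^2) ≤ kummerM (α/2+1) (3/2) (y^2) :=
    kummerM_mono ha (by norm_num) (sq_nonneg x) (pow_le_pow_left₀ hx hxy 2)
  have h3 : (0:ℝ) ≤ kummerM (α/2+1) (3/2) (x^2) :=
    le_trans zero_le_one (one_le_kummerM ha (by norm_num) (sq_nonneg x))
  exact mul_le_mul h1 h2 h3 (Real.rpow_nonneg (hx.trans hxy) _)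

lemma fFun_strict {α x y : ℝ} (hα : 0 ≤ α) (hx : 0 < x) (hxy : x < y) :
    fFun α x < fFun α y := by
  have ha : (0:ℝ) < α/2 + 1 := by linarith
  have h1 : x ^ (α+2) < y ^ (α+2) := Real.rpow_lt_rpow hx.le hxy (by linarith)
  have h2 : kummerM (α/2+1) (3/2) (x^2) ≤ kummerM (α/2+1) (3/2) (y^2) :=
    kummerM_mono ha (by norm_num) (sq_nonneg x) (pow_le_pow_left₀ hx.le hxy.le 2)
  have h3 : (0:ℝ) < kummerM (α/2+1) (3/2) (x^2) :=
    lt_of_lt_of_le one_pos (one_le_kummerM ha (by norm_num) (sq_nonneg x))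
  calc fFun α x = x ^ (α+2) * kummerM (α/2+1) (3/2) (x^2) := rfl
    _ < y ^ (α+2) * kummerM (α/2+1) (3/2) (x^2) := mul_lt_mul_of_pos_right h1 h3
    _ ≤ y ^ (α+2) * kummerM (α/2+1) (3/2) (y^2) :=
        mul_le_mul_of_nonneg_left h2 (Real.rpow_nonneg (hx.le.trans hxy.le) _)
    _ = fFun α y := rfl

/-- convergence of the free-boundary coefficient as `h₀ → inf`. -/
theorem nu_tendsto_nu_infty (α d k γ Tinf : ℝ)
    (hα : 0 ≤ α) (hd : 0 < d) (hk : 0 < k) (hγ : 0 < γ) (hT : 0 < Tinf)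
    (νf : ℝ → ℝ)
    (hνf : ∀ h₀ : ℝ, 0 < h₀ → 0 < νf h₀ ∧
      h₀ * Tinf / (γ * 2 ^ α * d ^ ((α + 1) / 2))
        = (νf h₀) ^ (α + 1) * (kummerM (α / 2 + 1 / 2) (1 / 2) ((νf h₀) ^ 2)
            + 2 * (Real.sqrt d * h₀ / k) * νf h₀ * kummerM (α / 2 + 1) (3 / 2) ((νf h₀) ^ 2)))
    (νinf : ℝ) (hνinf : 0 < νinf)
    (hνinfeq : k * Tinf / (2 ^ (α + 1) * d ^ (α / 2 + 1) * γ)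
      = νinf ^ (α + 2) * kummerM (α / 2 + 1) (3 / 2) (νinf ^ 2)) :
    Filter.Tendsto νf Filter.atTop (nhds νinf) := by
  have hs : 0 < Real.sqrt d := Real.sqrt_pos.2 hd
  have h2α : (0:ℝ) < (2:ℝ) ^ α := Real.rpow_pos_of_pos two_pos α
  have hdB : (0:ℝ) < d ^ ((α+1)/2) := Real.rpow_pos_of_pos hd _
  set C := k * Tinf / (2 ^ (α + 1) * d ^ (α / 2 + 1) * γ) with hC
  have hCF : C = fFun α νinf := by
    unfold fFun; exact hνinfeq
  have e2 : (2:ℝ) ^ (α+1) = 2 * (2:ℝ) ^ α := by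
    rw [Real.rpow_add two_pos, Real.rpow_one, mul_comm]
  have ed : d ^ (α/2+1) = Real.sqrt d * d ^ ((α+1)/2) := by
    rw [Real.sqrt_eq_rpow, ← Real.rpow_add hd]
    congr 1; ring
  have step : ∀ h₀ : ℝ, 0 < h₀ →
      C = k / (2 * Real.sqrt d * h₀) * gFun α (νf h₀) + fFun α (νf h₀) := by
    intro h₀ hp
    obtain ⟨hν, E⟩ := hνf h₀ hp
    have eν : (νf h₀) ^ (α+2) = (νf h₀) ^ (α+1) * νf h₀ := by
      rw [show α+2 = α+1+1 by ring, Real.rpow_add_one hν.ne']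
    have s1 : C = k / (2 * Real.sqrt d * h₀)
        * (h₀ * Tinf / (γ * 2 ^ α * d ^ ((α + 1) / 2))) := by
      rw [hC, e2, ed]
      field_simp
    rw [s1, E]
    unfold gFun fFun
    rw [eν]
    field_simp
  have νlt : ∀ h₀ : ℝ, 0 < h₀ → νf h₀ < νinf := by
    intro h₀ hp
    obtain ⟨hν, _⟩ := hνf h₀ hp
    have hstep := step h₀ hp
    have hg : 0 < gFun α (νf h₀) := gFun_pos hα hν
    have hco : 0 < k / (2 * Real.sqrt d * h₀) := by positivity
    have hflt : fFun α (νf h₀) < C := by nlinarith [mul_pos hco hg]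
    by_contra h
    push_neg at h
    have := fFun_mono hα hνinf.le h
    rw [← hCF] at this
    linarith
  set K := k * gFun α νinf / (2 * Real.sqrt d) with hK
  have hK0 : 0 ≤ K := by
    have := (gFun_pos hα hνinf).le
    positivity
  have lower : ∀ h₀ : ℝ, 0 < h₀ → C - K / h₀ ≤ fFun α (νf h₀) := by
    intro h₀ hp
    obtain ⟨hν, _⟩ := hνf h₀ hp
    have hstep := step h₀ hp
    have hgm : gFun α (νf h₀) ≤ gFun α νinf := gFun_mono hα hν.le (νlt h₀ hp).le
    have hco : 0 ≤ k / (2 * Real.sqrt d * h₀) := by positivity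
    have h1 : k / (2 * Real.sqrt d * h₀) * gFun α (νf h₀) ≤ K / h₀ := by
      have hKe : K / h₀ = k / (2 * Real.sqrt d * h₀) * gFun α νinf := by
        rw [hK]; field_simp
      rw [hKe]
      exact mul_le_mul_of_nonneg_left hgm hco
    linarith
  rw [tendsto_order]
  constructor
  · intro a ha
    set x₀ := max a (νinf/2) with hx₀def
    have hx₀pos : 0 < x₀ := lt_of_lt_of_le (by linarith) (le_max_right _ _)
    have hx₀lt : x₀ < νinf := max_lt ha (by linarith)
    have hFx₀ : fFun α x₀ < C := by rw [hCF]; exact fFun_strict hα hx₀pos hx₀lt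
    filter_upwards [eventually_gt_atTop (max 0 (K / (C - fFun α x₀)))] with h₀ hh₀
    have hp : 0 < h₀ := lt_of_le_of_lt (le_max_left _ _) hh₀
    have hCx : 0 < C - fFun α x₀ := by linarith
    have hKh : K / h₀ < C - fFun α x₀ := by
      have h2 : K / (C - fFun α x₀) < h₀ := lt_of_le_of_lt (le_max_right _ _) hh₀
      rw [div_lt_iff₀ hp]
      nlinarith [(div_lt_iff₀ hCx).1 h2]
    have hfgt : fFun α x₀ < fFun α (νf h₀) := by
      have := lower h₀ hp
      linarith
    have hx₀νf : x₀ < νf h₀ := by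
      by_contra h
      push_neg at h
      have := fFun_mono hα (hνf h₀ hp).1.le h
      linarith
    exact lt_of_le_of_lt (le_max_left a _) hx₀νf
  · intro a ha
    filter_upwards [eventually_gt_atTop 0] with h₀ hp
    exact (νlt h₀ hp).trans ha
end
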